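/- Let A be the incidence algebra of a finite poset presented by a bound quiver with full commutativity relations, M a finite-dimensional right A-module, and f : X → M a morphism. Then f is a right interval approximation of M (i.e., a right add{V_I : I interval}-approximation) if and only if for every interval I such that there exists a monomorphism V_I → M, every monomorphism g : V_I → M factors through f. -/

import Mathlib

set_option linter.unusedSectionVars false

open scoped Classical

/-- A persistence module over the poset `P`: a functor `P → Vect_k`.
(This models pointwise finite modules over the incidence algebra `A = kQ/ρ` of the poset.) -/
structure PersMod (k P : Type) [Field k] [PartialOrder P] where
  V : P → Type
  [acg : ∀ a, AddCommGroup (V a)]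
  [mod : ∀ a, Module k (V a)]
  map : ∀ {a b : P}, a ≤ b → (V a →ₗ[k] V b)
  map_id : ∀ a : P, map (le_refl a) = LinearMap.id
  map_comp : ∀ {a b c : P} (h₁ : a ≤ b) (h₂ : b ≤ c),
    (map h₂).comp (map h₁) = map (h₁.trans h₂)

attribute [instance] PersMod.acg PersMod.mod

variable {k P : Type} [Field k] [PartialOrder P]

/-- Morphisms of persistence modules, as a `k`-submodule of the product of Hom-spaces. -/
def PersHomSub (M N : PersMod k P) :
    Submodule k (∀ a : P, M.V a →ₗ[k] N.V a) where
  carrier := {f | ∀ ⦃a b : P⦄ (h : a ≤ b), (N.map h).comp (f a) = (f b).comp (M.map h)}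
  add_mem' := by
    intro f g hf hg a b h
    simp only [Pi.add_apply, LinearMap.comp_add, LinearMap.add_comp, hf h, hg h]
  zero_mem' := by intro a b h; simp
  smul_mem' := by
    intro c f hf a b h
    simp only [Pi.smul_apply, LinearMap.comp_smul, LinearMap.smul_comp, hf h]

/-- The space of morphisms `M → N` of persistence modules. -/
def PersHom (M N : PersMod k P) : Type := ↥(PersHomSub M N)

noncomputable instance (M N : PersMod k P) : AddCommGroup (PersHom M N) :=
  inferInstanceAs (AddCommGroup ↥(PersHomSub M N))
noncomputable instance (M N : PersMod k P) : Module k (PersHom M N) :=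
  inferInstanceAs (Module k ↥(PersHomSub M N))

/-- Composition of morphisms of persistence modules. -/
def PersHom.comp {M N O : PersMod k P} (g : PersHom N O) (f : PersHom M N) :
    PersHom M O :=
  ⟨fun a => (g.1 a).comp (f.1 a), by
    intro a b h
    rw [← LinearMap.comp_assoc, g.2 h, LinearMap.comp_assoc, f.2 h, LinearMap.comp_assoc]⟩

def IsMonoP {M N : PersMod k P} (f : PersHom M N) : Prop :=
  ∀ a : P, Function.Injective (f.1 a)

def IsEpiP {M N : PersMod k P} (f : PersHom M N) : Prop :=
  ∀ a : P, Function.Surjective (f.1 a)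

def IsIsoP {M N : PersMod k P} (f : PersHom M N) : Prop :=
  ∀ a : P, Function.Bijective (f.1 a)

/-- Convexity of a subset of the poset. -/
def IsConvexSet (I : Set P) : Prop :=
  ∀ ⦃a b c : P⦄, a ∈ I → c ∈ I → a ≤ b → b ≤ c → b ∈ I

/-- Zigzag-connectivity of a subset of the poset. -/
def IsConnectedSet (I : Set P) : Prop :=
  I.Nonempty ∧ ∀ a ∈ I, ∀ b ∈ I,
    Relation.ReflTransGen (fun x y => x ∈ I ∧ y ∈ I ∧ (x ≤ y ∨ y ≤ x)) a b

/-- An interval of the poset: a connected convex subset. -/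
def IsIntervalSet (I : Set P) : Prop := IsConvexSet I ∧ IsConnectedSet I

/-- The underlying linear map of the interval module. -/
noncomputable def intervalMap (I : Set P) (a b : P) :
    ↥(if a ∈ I then (⊤ : Submodule k k) else ⊥) →ₗ[k]
      ↥(if b ∈ I then (⊤ : Submodule k k) else ⊥) where
  toFun v := ⟨if a ∈ I ∧ b ∈ I then (v : k) else 0, by
    by_cases hb : b ∈ I
    · simp [hb]
    · have hab : ¬(a ∈ I ∧ b ∈ I) := fun h' => hb h'.2
      rw [if_neg hb, if_neg hab]; exact Submodule.zero_mem _⟩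
  map_add' v w := by
    apply Subtype.ext
    by_cases h' : a ∈ I ∧ b ∈ I <;> simp [h']
  map_smul' c v := by
    apply Subtype.ext
    by_cases h' : a ∈ I ∧ b ∈ I <;> simp [h']

@[simp] lemma intervalMap_coe (I : Set P) (a b : P)
    (v : ↥(if a ∈ I then (⊤ : Submodule k k) else ⊥)) :
    ((intervalMap I a b v : ↥(if b ∈ I then (⊤ : Submodule k k) else ⊥)) : k)
      = if a ∈ I ∧ b ∈ I then (v : k) else 0 := rfl

lemma intervalMem_zero {I : Set P} {a : P} (ha : a ∉ I)
    (v : ↥(if a ∈ I then (⊤ : Submodule k k) else ⊥)) : (v : k) = 0 := by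
  obtain ⟨x, hx⟩ := v
  rw [if_neg ha] at hx
  exact (Submodule.mem_bot k).mp hx

/-- The interval module `V_I` associated to a convex subset `I`. -/
noncomputable def intervalMod (I : Set P) (hI : IsConvexSet I) : PersMod k P where
  V a := ↥(if a ∈ I then (⊤ : Submodule k k) else ⊥)
  map {a b} _ := intervalMap I a b
  map_id a := by
    ext v
    rw [intervalMap_coe]
    by_cases ha : a ∈ I
    · simp [ha]
    · simp only [ha, and_self, if_false, LinearMap.id_coe, id_eq, intervalMem_zero ha v]
  map_comp {a b c} h₁ h₂ := by
    ext v
    rw [LinearMap.comp_apply, intervalMap_coe, intervalMap_coe, intervalMap_coe]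
    by_cases ha : a ∈ I <;> by_cases hb : b ∈ I <;> by_cases hc : c ∈ I <;>
      first
        | (exact absurd (hI ha hc h₁ h₂) hb)
        | simp [ha, hb, hc]

/-- Finite direct sums of persistence modules. -/
noncomputable def dSum {ι : Type} (M : ι → PersMod k P) : PersMod k P where
  V a := ∀ i, (M i).V a
  map {a b} h := LinearMap.pi fun i => ((M i).map h).comp (LinearMap.proj i)
  map_id a := by
    refine LinearMap.ext fun v => ?_
    funext i
    simp [LinearMap.pi_apply, (M i).map_id]
  map_comp {a b c} h₁ h₂ := by
    refine LinearMap.ext fun v => ?_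
    funext i
    simpa [LinearMap.pi_apply] using LinearMap.congr_fun ((M i).map_comp h₁ h₂) (v i)

/-- A persistence module is interval decomposable if it is isomorphic to a finite
direct sum of interval modules. -/
def IntervalDecomposable (W : PersMod k P) : Prop :=
  ∃ (n : ℕ) (J : Fin n → Set P) (hJ : ∀ i, IsIntervalSet (J i))
    (e : PersHom W (dSum fun i => intervalMod (J i) (hJ i).1)), IsIsoP e

/-- The combined morphism `⊕ᵢ Mᵢ → N` of a finite family of morphisms `Mᵢ → N`. -/
noncomputable def combineHom {ι : Type} [Fintype ι] {Mf : ι → PersMod k P}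
    {N : PersMod k P} (f : ∀ i, PersHom (Mf i) N) : PersHom (dSum Mf) N :=
  ⟨fun a => ∑ i, ((f i).1 a).comp (LinearMap.proj i), by
    intro a b h
    refine LinearMap.ext fun v => ?_
    simp only [LinearMap.comp_apply, LinearMap.sum_apply, LinearMap.proj_apply, map_sum]
    refine Finset.sum_congr rfl fun i _ => ?_
    have := LinearMap.congr_fun ((f i).2 h) (v i)
    exact this⟩

/-- `f : X → M` is a right interval approximation: every morphism from an interval module
to `M` factors through `f`. -/
def IsRightIntervalApprox {k P : Type} [Field k] [PartialOrder P]
    {X M : PersMod k P} (f : PersHom X M) : Prop :=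
  ∀ (J : Set P) (hJ : IsIntervalSet J) (g : PersHom (intervalMod J hJ.1) M),
    ∃ h : PersHom (intervalMod J hJ.1) X, f.comp h = g

/-- A "cast" map between the fibers of two interval modules. -/
noncomputable def castMap (K J : Set P) (a : P) :
    ↥(if a ∈ K then (⊤ : Submodule k k) else ⊥) →ₗ[k]
      ↥(if a ∈ J then (⊤ : Submodule k k) else ⊥) where
  toFun v := ⟨if a ∈ K ∧ a ∈ J then (v : k) else 0, by
    by_cases hb : a ∈ J
    · simp [hb]
    · have : ¬(a ∈ K ∧ a ∈ J) := fun h' => hb h'.2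
      rw [if_neg hb, if_neg this]; exact Submodule.zero_mem _⟩
  map_add' v w := by apply Subtype.ext; by_cases h' : a ∈ K ∧ a ∈ J <;> simp [h']
  map_smul' c v := by apply Subtype.ext; by_cases h' : a ∈ K ∧ a ∈ J <;> simp [h']

@[simp] lemma castMap_coe (K J : Set P) (a : P)
    (v : ↥(if a ∈ K then (⊤ : Submodule k k) else ⊥)) :
    ((castMap K J a v : ↥(if a ∈ J then (⊤ : Submodule k k) else ⊥)) : k)
      = if a ∈ K ∧ a ∈ J then (v : k) else 0 := rfl

lemma interval_eq_zero {I : Set P} {a : P} (ha : a ∉ I)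
    (v : ↥(if a ∈ I then (⊤ : Submodule k k) else ⊥)) : v = 0 :=
  Subtype.ext (by simpa using intervalMem_zero ha v)

/-- Restriction of a morphism from an interval module to a suitable subinterval. -/
noncomputable def restrictHom {J : Set P} {M : PersMod k P} (hJc : IsConvexSet J)
    (g : PersHom (intervalMod J hJc) M) (S : Set P) (hSc : IsConvexSet S)
    (hSJ : S ⊆ J)
    (hup : ∀ ⦃x y : P⦄, x ≤ y → x ∈ S → y ∈ J → g.1 y ≠ 0 → y ∈ S) :
    PersHom (intervalMod S hSc) M := by
  refine ⟨fun a => (g.1 a).comp (castMap S J a), ?_⟩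
  intro a b hab
  refine LinearMap.ext fun v => ?_
  have hg := LinearMap.congr_fun (g.2 hab) (castMap S J a v)
  change M.map hab (g.1 a (castMap S J a v)) = g.1 b ((intervalMod J hJc).map hab (castMap S J a v)) at hg
  change M.map hab (g.1 a (castMap S J a v)) = g.1 b (castMap S J b ((intervalMod S hSc).map hab v))
  refine hg.trans ?_
  by_cases haS : a ∈ S
  · by_cases hbS : b ∈ S
    · congr 1
      apply Subtype.ext
      show (if a ∈ J ∧ b ∈ J then (if a ∈ S ∧ a ∈ J then ((show ↥(if a ∈ S then (⊤ : Submodule k k) else ⊥) from v).1) else 0) else 0)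
        = (if b ∈ S ∧ b ∈ J then (if a ∈ S ∧ b ∈ S then ((show ↥(if a ∈ S then (⊤ : Submodule k k) else ⊥) from v).1) else 0) else 0)
      simp [haS, hbS, hSJ haS, hSJ hbS]
    · by_cases hbJ : b ∈ J
      · have hgb : g.1 b = 0 := by
          by_contra h0
          exact hbS (hup hab haS hbJ h0)
        rw [hgb]; rfl
      · congr 1
        apply Subtype.ext
        show (if a ∈ J ∧ b ∈ J then (if a ∈ S ∧ a ∈ J then ((show ↥(if a ∈ S then (⊤ : Submodule k k) else ⊥) from v).1) else 0) else 0)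
          = (if b ∈ S ∧ b ∈ J then (if a ∈ S ∧ b ∈ S then ((show ↥(if a ∈ S then (⊤ : Submodule k k) else ⊥) from v).1) else 0) else 0)
        simp [hbJ, hbS]
  · have hv : v = 0 := interval_eq_zero haS v
    refine congrArg (g.1 b) ?_
    apply Subtype.ext
    show (if a ∈ J ∧ b ∈ J then (if a ∈ S ∧ a ∈ J then ((show ↥(if a ∈ S then (⊤ : Submodule k k) else ⊥) from v).1) else 0) else 0)
      = (if b ∈ S ∧ b ∈ J then (if a ∈ S ∧ b ∈ S then ((show ↥(if a ∈ S then (⊤ : Submodule k k) else ⊥) from v).1) else 0) else 0)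
    simp [haS]

lemma restrictHom_mono {J : Set P} {M : PersMod k P} (hJc : IsConvexSet J)
    (g : PersHom (intervalMod J hJc) M) (S : Set P) (hSc : IsConvexSet S)
    (hSJ : S ⊆ J)
    (hup : ∀ ⦃x y : P⦄, x ≤ y → x ∈ S → y ∈ J → g.1 y ≠ 0 → y ∈ S)
    (hsupp : ∀ a ∈ S, g.1 a ≠ 0) :
    IsMonoP (restrictHom hJc g S hSc hSJ hup) := by
  intro a
  by_cases haS : a ∈ S
  · have hker : ∀ u : ↥(if a ∈ S then (⊤ : Submodule k k) else ⊥),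
        (restrictHom hJc g S hSc hSJ hup).1 a u = 0 → u = 0 := by
      intro u hu
      by_contra h0
      have hco : (u : k) ≠ 0 := fun hc => h0 (Subtype.ext (by simpa using hc))
      apply hsupp a haS
      suffices hall : ∀ w : ↥(if a ∈ J then (⊤ : Submodule k k) else ⊥),
          g.1 a w = 0 from LinearMap.ext hall
      intro w
      have hw : w = ((w : k) * (u : k)⁻¹) • castMap S J a u := by
        apply Subtype.ext
        simp only [SetLike.val_smul, castMap_coe, haS, hSJ haS, and_self, if_true,
          smul_eq_mul]
        rw [mul_assoc, inv_mul_cancel₀ hco, mul_one]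
      have hgu : g.1 a (castMap S J a u) = 0 := hu
      rw [hw]
      exact (LinearMap.map_smul (g.1 a) _ _).trans (by rw [hgu, smul_zero])
    intro v w hvw
    have h0 : v - w = 0 := hker _ (by rw [map_sub, hvw, sub_self])
    exact sub_eq_zero.mp h0
  · intro v w _
    rw [interval_eq_zero haS v, interval_eq_zero haS w]

/-- For `X` interval decomposable, `f : X → M` is a right interval
approximation of `M` iff for every interval `I` admitting a monomorphism `V_I → M`,
every monomorphism `g : V_I → M` factors through `f`. -/
theorem rightIntervalApprox_iff_monos_factor
    {k P : Type} [Field k] [PartialOrder P] [Fintype P]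
    (X M : PersMod k P)
    (hXfin : ∀ a, FiniteDimensional k (X.V a)) (hMfin : ∀ a, FiniteDimensional k (M.V a))
    (hX : IntervalDecomposable X) (f : PersHom X M) :
    IsRightIntervalApprox f ↔
      ∀ (I : Set P) (hI : IsIntervalSet I),
        (∃ m : PersHom (intervalMod I hI.1) M, IsMonoP m) →
        ∀ g : PersHom (intervalMod I hI.1) M, IsMonoP g →
          ∃ h : PersHom (intervalMod I hI.1) X, f.comp h = g := by
  constructor
  · intro hra I hI _ g hg
    exact hra I hI g
  · intro H J hJ g
    classical
    -- the support of `g`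
    set K : Set P := {a | a ∈ J ∧ g.1 a ≠ 0} with hKdef
    have hKJ : K ⊆ J := fun a ha => ha.1
    -- the support is down-closed within `J`
    have hdown : ∀ ⦃a b : P⦄, a ≤ b → a ∈ J → b ∈ K → a ∈ K := by
      intro a b hab haJ hbK
      refine ⟨haJ, fun h0 => hbK.2 ?_⟩
      suffices hall : ∀ v : ↥(if b ∈ J then (⊤ : Submodule k k) else ⊥),
          g.1 b v = 0 from LinearMap.ext fun v => (hall v).trans (by simp)
      intro v
      have hv : v = (intervalMod J hJ.1).map hab ⟨(v : k), by simp [haJ]⟩ := by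
        apply Subtype.ext
        by_cases hbJ : b ∈ J
        · show (v : k) = if a ∈ J ∧ b ∈ J then (v : k) else 0; simp [haJ, hbJ]
        · show (v : k) = if a ∈ J ∧ b ∈ J then (v : k) else 0; simp [intervalMem_zero hbJ v, hbJ]
      rw [hv]
      have hcm := LinearMap.congr_fun (g.2 hab)
        (⟨(v : k), by simp [haJ]⟩ : ↥(if a ∈ J then (⊤ : Submodule k k) else ⊥))
      change M.map hab (g.1 a _) = g.1 b ((intervalMod J hJ.1).map hab _) at hcm
      rw [← hcm, h0]
      exact (congrArg (M.map hab) (LinearMap.zero_apply _)).trans (map_zero _)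
    -- the zigzag relation on the support, and its connected components
    set r : P → P → Prop := fun x y => x ∈ K ∧ y ∈ K ∧ (x ≤ y ∨ y ≤ x) with hrdef
    have hrsymm : Symmetric r := fun x y h => ⟨h.2.1, h.1, h.2.2.symm⟩
    have hRsymm : Symmetric (Relation.ReflTransGen r) :=
      fun x y h => by
        haveI : Std.Symm r := ⟨fun a b h => hrsymm h⟩
        exact Std.Symm.symm (r := Relation.ReflTransGen r) x y h
    set C : P → Set P := fun b => {c | Relation.ReflTransGen r b c} with hCdef
    have hself : ∀ b, b ∈ C b := fun b => Relation.ReflTransGen.refl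
    have hCK : ∀ {b}, b ∈ K → C b ⊆ K := by
      intro b hb c hc
      induction hc with
      | refl => exact hb
      | tail _ st _ => exact st.2.1
    have hCsame : ∀ {b c}, c ∈ C b → C b = C c := by
      intro b c hc
      ext d
      exact ⟨fun hd => (hRsymm hc).trans hd, fun hd => hc.trans hd⟩
    have hCconv : ∀ {b}, b ∈ K → IsConvexSet (C b) := by
      intro b hb x y z hx hz hxy hyz
      have hxK : x ∈ K := hCK hb hx
      have hzK : z ∈ K := hCK hb hz
      have hyJ : y ∈ J := hJ.1 (hKJ hxK) (hKJ hzK) hxy hyz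
      have hyK : y ∈ K := hdown hyz hyJ hzK
      exact hx.tail ⟨hxK, hyK, Or.inl hxy⟩
    have hCconn : ∀ {b}, b ∈ K → IsConnectedSet (C b) := by
      intro b hb
      refine ⟨⟨b, hself b⟩, ?_⟩
      intro x hx y hy
      have hxy : Relation.ReflTransGen r x y := (hRsymm hx).trans hy
      clear hy
      induction hxy with
      | refl => exact Relation.ReflTransGen.refl
      | tail p st ih =>
        exact ih.tail ⟨hx.trans p, (hx.trans p).tail st, st.2.2⟩
    have hCJ : ∀ {b}, b ∈ K → C b ⊆ J := fun hb x hx => hKJ (hCK hb hx)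
    have hCup : ∀ {b}, b ∈ K → ∀ ⦃x y : P⦄, x ≤ y → x ∈ C b → y ∈ J →
        g.1 y ≠ 0 → y ∈ C b := by
      intro b hb x y hxy hx hyJ hgy
      exact hx.tail ⟨hCK hb hx, ⟨hyJ, hgy⟩, Or.inl hxy⟩
    have hCsupp : ∀ {b}, b ∈ K → ∀ a ∈ C b, g.1 a ≠ 0 :=
      fun hb a ha => (hCK hb ha).2
    -- apply the hypothesis to each component via choice over sets
    have key : ∀ (S : Set P) (h1 : IsConvexSet S) (h2 : IsConnectedSet S)
        (h3 : S ⊆ J) (h4 : ∀ ⦃x y : P⦄, x ≤ y → x ∈ S → y ∈ J → g.1 y ≠ 0 → y ∈ S)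
        (h5 : ∀ a ∈ S, g.1 a ≠ 0),
        ∃ h : PersHom (intervalMod S h1) X,
          f.comp h = restrictHom hJ.1 g S h1 h3 h4 := by
      intro S h1 h2 h3 h4 h5
      exact H S ⟨h1, h2⟩
        ⟨restrictHom hJ.1 g S h1 h3 h4, restrictHom_mono hJ.1 g S h1 h3 h4 h5⟩
        (restrictHom hJ.1 g S h1 h3 h4) (restrictHom_mono hJ.1 g S h1 h3 h4 h5)
    choose hfun hspec using key
    have hcongr : ∀ (S S' : Set P) (hss : S = S')
        (h1 : IsConvexSet S) (h2 : IsConnectedSet S) (h3 : S ⊆ J)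
        (h4 : ∀ ⦃x y : P⦄, x ≤ y → x ∈ S → y ∈ J → g.1 y ≠ 0 → y ∈ S)
        (h5 : ∀ a ∈ S, g.1 a ≠ 0)
        (h1' : IsConvexSet S') (h2' : IsConnectedSet S') (h3' : S' ⊆ J)
        (h4' : ∀ ⦃x y : P⦄, x ≤ y → x ∈ S' → y ∈ J → g.1 y ≠ 0 → y ∈ S')
        (h5' : ∀ a ∈ S', g.1 a ≠ 0) (a : P),
        ((hfun S h1 h2 h3 h4 h5).1 a).comp (castMap J S a)
          = ((hfun S' h1' h2' h3' h4' h5').1 a).comp (castMap J S' a) := by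
      intro S S' hss
      subst hss
      intros
      rfl
    -- assemble the factorization
    refine ⟨⟨fun a => if ha : a ∈ K then
        ((hfun (C a) (hCconv ha) (hCconn ha) (hCJ ha) (hCup ha) (hCsupp ha)).1 a).comp
          (castMap J (C a) a)
      else 0, ?_⟩, ?_⟩
    · intro a b hab
      by_cases ha : a ∈ K
      · by_cases hb : b ∈ K
        · simp only [dif_pos ha, dif_pos hb]
          have hbCa : b ∈ C a := Relation.ReflTransGen.single ⟨ha, hb, Or.inl hab⟩
          erw [hcongr (C b) (C a) (hCsame hbCa).symm (hCconv hb) (hCconn hb) (hCJ hb)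
            (hCup hb) (hCsupp hb) (hCconv ha) (hCconn ha) (hCJ ha) (hCup ha) (hCsupp ha) b]
          refine LinearMap.ext fun v => ?_
          have hphi := LinearMap.congr_fun
            (((hfun (C a) (hCconv ha) (hCconn ha) (hCJ ha) (hCup ha) (hCsupp ha))).2 hab)
            (castMap J (C a) a v)
          simp only [LinearMap.comp_apply] at hphi ⊢
          refine hphi.trans ?_
          change (hfun (C a) (hCconv ha) (hCconn ha) (hCJ ha) (hCup ha) (hCsupp ha)).1 b ((intervalMod (C a) (hCconv ha)).map hab (castMap J (C a) a v))
            = (hfun (C a) (hCconv ha) (hCconn ha) (hCJ ha) (hCup ha) (hCsupp ha)).1 b (castMap J (C a) b ((intervalMod J hJ.1).map hab v))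
          congr 1
          apply Subtype.ext
          show (if a ∈ C a ∧ b ∈ C a then (if a ∈ J ∧ a ∈ C a then ((show ↥(if a ∈ J then (⊤ : Submodule k k) else ⊥) from v).1) else 0) else 0)
            = (if b ∈ J ∧ b ∈ C a then (if a ∈ J ∧ b ∈ J then ((show ↥(if a ∈ J then (⊤ : Submodule k k) else ⊥) from v).1) else 0) else 0)
          simp [hself a, hbCa, hKJ ha, hKJ hb]
        · simp only [dif_pos ha, dif_neg hb]
          refine LinearMap.ext fun v => ?_
          have hphi := LinearMap.congr_fun
            (((hfun (C a) (hCconv ha) (hCconn ha) (hCJ ha) (hCup ha) (hCsupp ha))).2 hab)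
            (castMap J (C a) a v)
          simp only [LinearMap.comp_apply] at hphi ⊢
          refine hphi.trans ?_
          have hbCa : b ∉ C a := fun hmem => hb (hCK ha hmem)
          have hz : (intervalMod (C a) (hCconv ha)).map hab (castMap J (C a) a v) = 0 := by
            exact interval_eq_zero hbCa _
          exact (congrArg (fun y => (hfun (C a) (hCconv ha) (hCconn ha) (hCJ ha) (hCup ha) (hCsupp ha)).1 b y) hz).trans (map_zero _)
      · by_cases hb : b ∈ K
        · simp only [dif_neg ha, dif_pos hb]
          refine LinearMap.ext fun v => ?_
          have haJ : a ∉ J := fun haJ => ha (hdown hab haJ hb)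
          have hv : v = 0 := interval_eq_zero haJ v
          simp [hv]
        · simp only [dif_neg ha, dif_neg hb]
          simp
    · apply Subtype.ext
      funext a
      show (f.1 a).comp _ = g.1 a
      by_cases ha : a ∈ K
      · simp only [dif_pos ha]
        have hs := hspec (C a) (hCconv ha) (hCconn ha) (hCJ ha) (hCup ha) (hCsupp ha)
        have hs' := congrArg (fun q : PersHom _ M => q.1 a) hs
        refine LinearMap.ext fun v => ?_
        simp only [LinearMap.comp_apply]
        have : f.1 a ((hfun (C a) (hCconv ha) (hCconn ha) (hCJ ha) (hCup ha)
            (hCsupp ha)).1 a (castMap J (C a) a v))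
            = (restrictHom hJ.1 g (C a) (hCconv ha) (hCJ ha) (hCup ha)).1 a
              (castMap J (C a) a v) :=
          LinearMap.congr_fun hs' (castMap J (C a) a v)
        refine this.trans ?_
        show g.1 a (castMap (C a) J a (castMap J (C a) a v)) = g.1 a v
        congr 1
        apply Subtype.ext
        show (if a ∈ C a ∧ a ∈ J then (if a ∈ J ∧ a ∈ C a then ((show ↥(if a ∈ J then (⊤ : Submodule k k) else ⊥) from v).1) else 0) else 0)
          = ((show ↥(if a ∈ J then (⊤ : Submodule k k) else ⊥) from v).1)
        simp [hself a, hKJ ha]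
      · simp only [dif_neg ha]
        refine LinearMap.ext fun v => ?_
        by_cases haJ : a ∈ J
        · have hga : g.1 a = 0 := by
            by_contra h0
            exact ha ⟨haJ, h0⟩
          simp [hga]
        · have hv : v = 0 := interval_eq_zero haJ v
          simp [hv]
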